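/- Let 0 < α < 1, 0 < η < 1/2 with η ≤ α and α/η ≤ 2. If a path γ : (0,1] → ℂ belongs to the singular Hölder space C^{α,η}((0,1]; ℂ), then the reparametrization t ↦ γ(t²) extends to an α-Hölder continuous function on [0,1]. -/

import Mathlib

open Set Filter Finset Topology

private lemma geom_sum_bound (r : ℝ) (h0 : 0 ≤ r) (h1 : r < 1) (n : ℕ) :
    ∑ k ∈ Finset.range n, r ^ k ≤ (1 - r)⁻¹ := by
  have h2 : 0 < 1 - r := by linarith
  have heq : ∑ k ∈ Finset.range n, r ^ k = (1 - r ^ n) / (1 - r) := by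
    rw [geom_sum_eq h1.ne]
    rw [div_eq_div_iff (by linarith) (by linarith)]
    ring
  rw [heq]
  have hrn : 0 ≤ r ^ n := pow_nonneg h0 n
  rw [div_le_iff₀ h2, inv_mul_cancel₀ h2.ne']
  linarith

set_option maxHeartbeats 1000000 in
/-- Chaining lemma: the two–point Hölder bound for the squared reparametrisation. -/
private lemma key_chain (α η : ℝ) (hα0 : 0 < α) (hα2η : α ≤ 2 * η)
    (γ : ℝ → ℂ) (K : ℝ) (hK : 0 ≤ K)
    (hγ : ∀ s t : ℝ, 0 < s → s < t → t ≤ 1 →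
      ‖γ t - γ s‖ ≤ K * s ^ (η - α) * (t - s) ^ α)
    (s t : ℝ) (hs : 0 < s) (hst : s ≤ t) (ht : t ≤ 1) :
    ‖γ (t ^ 2) - γ (s ^ 2)‖ ≤
      (K * (3/2) ^ α * (1 - (1/2 : ℝ) ^ α)⁻¹) * (t - s) ^ α := by
  set r : ℝ := (1/2 : ℝ) ^ α with hr
  have hr0 : 0 ≤ r := Real.rpow_nonneg (by norm_num) α
  have hr1 : r < 1 := Real.rpow_lt_one (by norm_num) (by norm_num) hα0
  clear_value r
  have hinv : 0 ≤ (1 - r)⁻¹ := inv_nonneg.mpr (by linarith)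
  have h32 : (0:ℝ) ≤ (3/2 : ℝ) ^ α := Real.rpow_nonneg (by norm_num) α
  have hC0 : 0 ≤ K * (3/2) ^ α * (1 - r)⁻¹ := mul_nonneg (mul_nonneg hK h32) hinv
  rcases eq_or_lt_of_le hst with rfl | hlt
  · simp [Real.zero_rpow hα0.ne', hC0]
  set d : ℝ := t - s with hd
  clear_value d
  have hd0 : 0 < d := by rw [hd]; linarith
  have hd1 : s + d ≤ 1 := by rw [hd]; linarith
  set w : ℕ → ℝ := fun k => s + d * (1/2 : ℝ) ^ k with hw
  have hweq : ∀ k, w k = s + d * (1/2 : ℝ) ^ k := fun k => by rw [hw]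
  clear_value w
  have hw0 : w 0 = t := by rw [hweq]; simp [hd]
  have hhalf : ∀ k : ℕ, (0:ℝ) < (1/2 : ℝ) ^ k := fun k => pow_pos (by norm_num) k
  have hhalf1 : ∀ k : ℕ, ((1/2 : ℝ)) ^ k ≤ 1 := fun k => pow_le_one₀ (by norm_num) (by norm_num)
  have hwpos : ∀ k, 0 < w k := by
    intro k; rw [hweq]
    have := mul_pos hd0 (hhalf k); linarith
  have hwle : ∀ k, w k ≤ 1 := by
    intro k; rw [hweq]
    have h1 : d * (1/2 : ℝ) ^ k ≤ d * 1 :=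
      mul_le_mul_of_nonneg_left (hhalf1 k) hd0.le
    linarith
  have hwdec : ∀ k, w (k + 1) < w k := by
    intro k; rw [hweq, hweq]
    have h1 : ((1:ℝ)/2) ^ (k+1) < (1/2) ^ k :=
      pow_lt_pow_right_of_lt_one₀ (by norm_num) (by norm_num) (by omega)
    have := mul_lt_mul_of_pos_left h1 hd0
    linarith
  have hpowk : ∀ k : ℕ, (((1:ℝ)/2) ^ k) ^ α = r ^ k := by
    intro k
    rw [hr, ← Real.rpow_natCast (1/2 : ℝ) k, ← Real.rpow_mul (by norm_num),
      mul_comm, Real.rpow_mul (by norm_num), Real.rpow_natCast]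
  -- the single–step estimate
  have hterm : ∀ k, ‖γ ((w k) ^ 2) - γ ((w (k+1)) ^ 2)‖ ≤ K * (3/2) ^ α * d ^ α * r ^ k := by
    intro k
    have hw1 : 0 < w (k+1) := hwpos (k+1)
    have hw1le : w (k+1) ≤ 1 := hwle (k+1)
    have hsq1 : 0 < (w (k+1)) ^ 2 := pow_pos hw1 2
    have hsq2 : (w (k+1)) ^ 2 < (w k) ^ 2 := by
      have := hwdec k; nlinarith [hwpos k]
    have hsq3 : (w k) ^ 2 ≤ 1 := by nlinarith [hwpos k, hwle k]
    have hbase := hγ _ _ hsq1 hsq2 hsq3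
    set δ : ℝ := d * (1/2 : ℝ) ^ k with hδ
    clear_value δ
    have hδ0 : 0 < δ := by rw [hδ]; exact mul_pos hd0 (hhalf k)
    have e1 : w k = w (k+1) + δ / 2 := by
      rw [hweq, hweq, hδ, pow_succ]; ring
    have e3 : w (k+1) = s + δ / 2 := by
      rw [hweq, hδ, pow_succ]; ring
    have hdiff : (w k) ^ 2 - (w (k+1)) ^ 2 ≤ (3/2) * δ * w (k+1) := by
      rw [e1, e3]; nlinarith [mul_pos hs hδ0]
    have hdiff0 : (0:ℝ) ≤ (w k) ^ 2 - (w (k+1)) ^ 2 := by linarith [hsq2.le]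
    have hA : (0:ℝ) ≤ ((w (k+1)) ^ 2) ^ (η - α) := Real.rpow_nonneg hsq1.le _
    have hKA : (0:ℝ) ≤ K * ((w (k+1)) ^ 2) ^ (η - α) := mul_nonneg hK hA
    have hδα : (0:ℝ) ≤ δ ^ α := Real.rpow_nonneg hδ0.le _
    calc ‖γ ((w k) ^ 2) - γ ((w (k+1)) ^ 2)‖
        ≤ K * ((w (k+1)) ^ 2) ^ (η - α) * ((w k) ^ 2 - (w (k+1)) ^ 2) ^ α := hbase
      _ ≤ K * ((w (k+1)) ^ 2) ^ (η - α) * ((3/2) * δ * w (k+1)) ^ α := by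
          apply mul_le_mul_of_nonneg_left _ hKA
          exact Real.rpow_le_rpow hdiff0 hdiff hα0.le
      _ = K * ((3/2) ^ α * δ ^ α) * (((w (k+1)) ^ 2) ^ (η - α) * (w (k+1)) ^ α) := by
          rw [Real.mul_rpow (mul_nonneg (by norm_num) hδ0.le) hw1.le,
            Real.mul_rpow (by norm_num) hδ0.le]
          ring
      _ ≤ K * ((3/2) ^ α * δ ^ α) * 1 := by
          apply mul_le_mul_of_nonneg_left _ (mul_nonneg hK (mul_nonneg h32 hδα))
          have e2 : ((w (k+1)) ^ 2) ^ (η - α) * (w (k+1)) ^ α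
              = (w (k+1)) ^ ((2:ℝ) * (η - α) + α) := by
            rw [← Real.rpow_natCast (w (k+1)) 2, ← Real.rpow_mul hw1.le,
              Real.rpow_add hw1]
            norm_num
          rw [e2]
          exact Real.rpow_le_one hw1.le hw1le (by linarith)
      _ = K * (3/2) ^ α * d ^ α * r ^ k := by
          rw [hδ, Real.mul_rpow hd0.le (hhalf k).le, hpowk]
          ring
  -- finite chaining
  have hsum : ∀ n : ℕ, ‖γ (t ^ 2) - γ ((w n) ^ 2)‖ ≤
      K * (3/2) ^ α * d ^ α * ∑ k ∈ Finset.range n, r ^ k := by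
    intro n
    induction n with
    | zero => simp [hw0]
    | succ n ih =>
        calc ‖γ (t ^ 2) - γ ((w (n+1)) ^ 2)‖
            ≤ ‖γ (t ^ 2) - γ ((w n) ^ 2)‖ + ‖γ ((w n) ^ 2) - γ ((w (n+1)) ^ 2)‖ :=
              norm_sub_le_norm_sub_add_norm_sub _ _ _
          _ ≤ K * (3/2) ^ α * d ^ α * ∑ k ∈ Finset.range n, r ^ k
              + K * (3/2) ^ α * d ^ α * r ^ n := add_le_add ih (hterm n)
          _ = K * (3/2) ^ α * d ^ α * ∑ k ∈ Finset.range (n+1), r ^ k := by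
              rw [Finset.sum_range_succ]; ring
  -- pass to the limit n → ∞
  have hmain : ∀ n : ℕ, ‖γ (t ^ 2) - γ (s ^ 2)‖ ≤
      K * (3/2) ^ α * (1 - r)⁻¹ * d ^ α
      + (K * (s ^ 2) ^ (η - α) * (3 ^ α * d ^ α)) * r ^ n := by
    intro n
    set δ : ℝ := d * (1/2 : ℝ) ^ n with hδ
    clear_value δ
    have hδ0 : 0 < δ := by rw [hδ]; exact mul_pos hd0 (hhalf n)
    have hwn : w n = s + δ := by rw [hweq, hδ]
    have hsq1 : 0 < s ^ 2 := pow_pos hs 2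
    have hsq2 : s ^ 2 < (w n) ^ 2 := by rw [hwn]; nlinarith
    have hsq3 : (w n) ^ 2 ≤ 1 := by nlinarith [hwpos n, hwle n]
    have htail := hγ _ _ hsq1 hsq2 hsq3
    have hδd : δ ≤ d := by
      have := mul_le_mul_of_nonneg_left (hhalf1 n) hd0.le
      rw [hδ]; linarith
    have hdiff : (w n) ^ 2 - s ^ 2 ≤ 3 * δ := by
      rw [hwn]
      have h1 : s + d ≤ 1 := hd1
      nlinarith [hs, hδ0]
    have hA : (0:ℝ) ≤ (s ^ 2) ^ (η - α) := Real.rpow_nonneg hsq1.le _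
    have htail2 : ‖γ ((w n) ^ 2) - γ (s ^ 2)‖ ≤
        (K * (s ^ 2) ^ (η - α) * (3 ^ α * d ^ α)) * r ^ n := by
      calc ‖γ ((w n) ^ 2) - γ (s ^ 2)‖
          ≤ K * (s ^ 2) ^ (η - α) * ((w n) ^ 2 - s ^ 2) ^ α := htail
        _ ≤ K * (s ^ 2) ^ (η - α) * (3 * δ) ^ α := by
            apply mul_le_mul_of_nonneg_left _ (mul_nonneg hK hA)
            exact Real.rpow_le_rpow (by linarith [hsq2.le]) hdiff hα0.le
        _ = (K * (s ^ 2) ^ (η - α) * (3 ^ α * d ^ α)) * r ^ n := by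
            rw [Real.mul_rpow (by norm_num) hδ0.le, hδ,
              Real.mul_rpow hd0.le (hhalf n).le, hpowk]
            ring
    have hKd : 0 ≤ K * (3/2) ^ α * d ^ α :=
      mul_nonneg (mul_nonneg hK h32) (Real.rpow_nonneg hd0.le _)
    have h5 : K * (3/2) ^ α * d ^ α * ∑ k ∈ Finset.range n, r ^ k
        ≤ K * (3/2) ^ α * (1 - r)⁻¹ * d ^ α := by
      calc K * (3/2) ^ α * d ^ α * ∑ k ∈ Finset.range n, r ^ k
          ≤ K * (3/2) ^ α * d ^ α * (1 - r)⁻¹ :=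
            mul_le_mul_of_nonneg_left (geom_sum_bound r hr0 hr1 n) hKd
        _ = K * (3/2) ^ α * (1 - r)⁻¹ * d ^ α := by ring
    calc ‖γ (t ^ 2) - γ (s ^ 2)‖
        ≤ ‖γ (t ^ 2) - γ ((w n) ^ 2)‖ + ‖γ ((w n) ^ 2) - γ (s ^ 2)‖ :=
          norm_sub_le_norm_sub_add_norm_sub _ _ _
      _ ≤ K * (3/2) ^ α * d ^ α * ∑ k ∈ Finset.range n, r ^ k
          + (K * (s ^ 2) ^ (η - α) * (3 ^ α * d ^ α)) * r ^ n :=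
          add_le_add (hsum n) htail2
      _ ≤ K * (3/2) ^ α * (1 - r)⁻¹ * d ^ α
          + (K * (s ^ 2) ^ (η - α) * (3 ^ α * d ^ α)) * r ^ n :=
          add_le_add h5 le_rfl
  have hlim : Tendsto (fun n : ℕ => K * (3/2) ^ α * (1 - r)⁻¹ * d ^ α
      + (K * (s ^ 2) ^ (η - α) * (3 ^ α * d ^ α)) * r ^ n) atTop
      (𝓝 (K * (3/2) ^ α * (1 - r)⁻¹ * d ^ α)) := by
    have h1 : Tendsto (fun n : ℕ => r ^ n) atTop (𝓝 0) :=
      tendsto_pow_atTop_nhds_zero_of_lt_one hr0 hr1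
    have h2 := h1.const_mul (K * (s ^ 2) ^ (η - α) * (3 ^ α * d ^ α))
    simpa using tendsto_const_nhds.add h2
  exact ge_of_tendsto' hlim hmain

/-- If `γ ∈ C^{α,η}((0,1];ℂ)` with `0 < η < 1/2`, `η ≤ α` and `α/η ≤ 2`, then
`t ↦ γ(t²)` extends to an `α`-Hölder continuous function on `[0,1]`. -/
theorem singular_holder_square_reparametrisation
    (α η : ℝ) (hα0 : 0 < α) (hα1 : α < 1)
    (hη0 : 0 < η) (hηhalf : η < 1 / 2) (hηα : η ≤ α) (hratio : α / η ≤ 2)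
    (γ : ℝ → ℂ) (K : ℝ) (hK : 0 ≤ K)
    (hγ : ∀ s t : ℝ, 0 < s → s < t → t ≤ 1 →
      ‖γ t - γ s‖ ≤ K * s ^ (η - α) * (t - s) ^ α) :
    ∃ g : ℝ → ℂ,
      (∀ t ∈ Ioc (0:ℝ) 1, g t = γ (t ^ 2)) ∧
      ∃ C : ℝ, 0 ≤ C ∧ ∀ s ∈ Icc (0:ℝ) 1, ∀ t ∈ Icc (0:ℝ) 1,
        ‖g t - g s‖ ≤ C * |t - s| ^ α := by
  have hα2η : α ≤ 2 * η := by
    rw [div_le_iff₀ hη0] at hratio; linarith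
  set C : ℝ := K * (3/2) ^ α * (1 - (1/2 : ℝ) ^ α)⁻¹ with hCdef
  have hr0 : 0 ≤ ((1:ℝ)/2) ^ α := Real.rpow_nonneg (by norm_num) α
  have hr1 : ((1:ℝ)/2) ^ α < 1 := Real.rpow_lt_one (by norm_num) (by norm_num) hα0
  have h32 : (0:ℝ) ≤ (3/2 : ℝ) ^ α := Real.rpow_nonneg (by norm_num) α
  have hC0 : 0 ≤ C :=
    mul_nonneg (mul_nonneg hK h32) (inv_nonneg.mpr (by linarith))
  have key : ∀ s t : ℝ, 0 < s → s ≤ t → t ≤ 1 →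
      ‖γ (t ^ 2) - γ (s ^ 2)‖ ≤ C * (t - s) ^ α :=
    fun s t hs hst ht => key_chain α η hα0 hα2η γ K hK hγ s t hs hst ht
  have key' : ∀ s ∈ Ioc (0:ℝ) 1, ∀ t ∈ Ioc (0:ℝ) 1,
      ‖γ (t ^ 2) - γ (s ^ 2)‖ ≤ C * |t - s| ^ α := by
    intro s hs t ht
    rcases le_total s t with h | h
    · rw [abs_of_nonneg (by linarith)]
      exact key s t hs.1 h ht.2
    · rw [← norm_neg, neg_sub, abs_sub_comm, abs_of_nonneg (by linarith)]
      exact key t s ht.1 h hs.2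
  -- the approximating sequence at 0
  set u : ℕ → ℂ := fun n => γ ((1 / (n + 1) : ℝ) ^ 2) with hu
  have hmem : ∀ n : ℕ, (1 / (n + 1) : ℝ) ∈ Ioc (0:ℝ) 1 := by
    intro n
    constructor
    · positivity
    · rw [div_le_one (by positivity)]
      have : (0:ℝ) ≤ (n:ℝ) := Nat.cast_nonneg n
      linarith
  have hcau : CauchySeq u := by
    refine cauchySeq_of_le_tendsto_0 (fun N => C * (1 / (N + 1) : ℝ) ^ α) ?_ ?_
    · intro n m N hn hm
      have h1 := key' _ (hmem m) _ (hmem n)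
      rw [dist_eq_norm]
      refine h1.trans ?_
      apply mul_le_mul_of_nonneg_left _ hC0
      apply Real.rpow_le_rpow (abs_nonneg _) _ hα0.le
      have hn1 : (1 / (n + 1) : ℝ) ≤ 1 / (N + 1) := by
        apply div_le_div_of_nonneg_left (by norm_num) (by positivity)
        have : (N:ℝ) ≤ n := Nat.cast_le.mpr hn
        linarith
      have hm1 : (1 / (m + 1) : ℝ) ≤ 1 / (N + 1) := by
        apply div_le_div_of_nonneg_left (by norm_num) (by positivity)
        have : (N:ℝ) ≤ m := Nat.cast_le.mpr hm
        linarith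
      have h2 : (0:ℝ) < 1 / (n + 1) := by positivity
      have h3 : (0:ℝ) < 1 / (m + 1) := by positivity
      rw [abs_le]
      constructor <;> linarith
    · have h1 : Tendsto (fun N : ℕ => (1 / (N + 1) : ℝ)) atTop (𝓝 0) :=
        tendsto_one_div_add_atTop_nhds_zero_nat
      have h2 : ContinuousAt (fun x : ℝ => x ^ α) 0 :=
        Real.continuousAt_rpow_const 0 α (Or.inr hα0.le)
      have h3 : Tendsto (fun N : ℕ => (1 / (N + 1) : ℝ) ^ α) atTop (𝓝 ((0:ℝ) ^ α)) :=
        (h2.tendsto).comp h1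
      rw [Real.zero_rpow hα0.ne'] at h3
      simpa using h3.const_mul C
  obtain ⟨L, hL⟩ := cauchySeq_tendsto_of_complete hcau
  set g : ℝ → ℂ := fun x => if x ≤ 0 then L else γ (x ^ 2) with hgdef
  have hgpos : ∀ x : ℝ, 0 < x → g x = γ (x ^ 2) := by
    intro x hx
    show (if x ≤ 0 then L else γ (x ^ 2)) = γ (x ^ 2)
    exact if_neg (not_le.mpr hx)
  have hg0 : g 0 = L := by
    show (if (0:ℝ) ≤ 0 then L else γ ((0:ℝ) ^ 2)) = L
    exact if_pos le_rfl
  refine ⟨g, ?_, C, hC0, ?_⟩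
  · intro t ht
    exact hgpos t ht.1
  · -- the bound at the left endpoint
    have h0 : ∀ t ∈ Ioc (0:ℝ) 1, ‖γ (t ^ 2) - L‖ ≤ C * t ^ α := by
      intro t ht
      have hf : Tendsto (fun n => ‖γ (t ^ 2) - u n‖) atTop (𝓝 ‖γ (t ^ 2) - L‖) :=
        (tendsto_const_nhds.sub hL).norm
      have hg : Tendsto (fun n : ℕ => C * |t - 1 / (n + 1)| ^ α) atTop (𝓝 (C * t ^ α)) := by
        have h1 : Tendsto (fun n : ℕ => t - (1 / (n + 1) : ℝ)) atTop (𝓝 t) := by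
          simpa using tendsto_const_nhds.sub (tendsto_one_div_add_atTop_nhds_zero_nat :
            Tendsto (fun n : ℕ => (1 / ((n : ℝ) + 1) : ℝ)) atTop (𝓝 0))
        have h2 : Tendsto (fun n : ℕ => |t - (1 / (n + 1) : ℝ)|) atTop (𝓝 |t|) :=
          h1.abs
        rw [abs_of_pos ht.1] at h2
        have h3 : ContinuousAt (fun x : ℝ => x ^ α) t :=
          Real.continuousAt_rpow_const t α (Or.inl ht.1.ne')
        exact ((h3.tendsto).comp h2).const_mul C
      exact le_of_tendsto_of_tendsto' hf hg (fun n => key' _ (hmem n) _ ht)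
    intro s hs t ht
    rcases eq_or_lt_of_le hs.1 with hs0 | hs0 <;> rcases eq_or_lt_of_le ht.1 with ht0 | ht0
    · rw [← hs0, ← ht0, hg0]
      simp [Real.zero_rpow hα0.ne', hC0]
    · rw [hgpos t ht0, ← hs0, hg0, sub_zero, abs_of_pos ht0]
      exact h0 t ⟨ht0, ht.2⟩
    · rw [hgpos s hs0, ← ht0, hg0, zero_sub, abs_neg, abs_of_pos hs0, ← norm_neg, neg_sub]
      exact h0 s ⟨hs0, hs.2⟩
    · rw [hgpos s hs0, hgpos t ht0]
      exact key' s ⟨hs0, hs.2⟩ t ⟨ht0, ht.2⟩
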